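/- arXiv:1603.09458 — 2 statements merged into one kernel-verified Lean document; each statement's English description precedes it below -/
import Mathlib

section
/- Let A be a real n×k matrix of rank k (n ≥ k), let P be a k×k orthogonal matrix and D a k×k diagonal matrix with positive diagonal entries such that Pᵀ(AᵀA)⁻¹P = D, and let Λ = diag(λ_1,…,λ_k) and C = diag(c_1,…,c_k) be diagonal with 0 < λ_i < c_i for all i. Set K := D⁻¹Λ(C − Λ)⁻¹. Then AᵀA + PKPᵀ is invertible and for every real n×p matrix Y, P(I − ΛC⁻¹)DPᵀAᵀY = (AᵀA + PKPᵀ)⁻¹AᵀY. In particular, the Bayes estimator B̂_B := P(I − ΛC⁻¹)DPᵀAᵀY is a generalized ridge estimator. -/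
open Matrix

theorem diag_inv {k : ℕ} (d : Fin k → ℝ) (hd0 : ∀ i, d i ≠ 0) :
    (diagonal d)⁻¹ = diagonal (fun i => (d i)⁻¹) := by
  apply inv_eq_right_inv
  rw [diagonal_mul_diagonal]
  have : (fun i => d i * (d i)⁻¹) = fun _ => (1:ℝ) :=
    funext fun i => mul_inv_cancel₀ (hd0 i)
  rw [this, diagonal_one]

/-- The Bayes estimator `P(I − ΛC⁻¹)DPᵀAᵀY` is a generalized ridge estimator: with
`K := D⁻¹Λ(C − Λ)⁻¹`, the matrix `AᵀA + PKPᵀ` is invertible and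
`P(I − ΛC⁻¹)DPᵀAᵀY = (AᵀA + PKPᵀ)⁻¹AᵀY` for every `Y`. -/
theorem stmt1 (n k p : ℕ) (hnk : k ≤ n)
    (A : Matrix (Fin n) (Fin k) ℝ) (hA : A.rank = k)
    (P : Matrix (Fin k) (Fin k) ℝ) (hP : Pᵀ * P = 1)
    (d : Fin k → ℝ) (hd : ∀ i, 0 < d i)
    (hPD : Pᵀ * (Aᵀ * A)⁻¹ * P = diagonal d)
    (lam c : Fin k → ℝ) (hlc : ∀ i, 0 < lam i ∧ lam i < c i) :
    IsUnit (Aᵀ * A +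
        P * ((diagonal d)⁻¹ * diagonal lam * (diagonal c - diagonal lam)⁻¹) * Pᵀ) ∧
      ∀ Y : Matrix (Fin n) (Fin p) ℝ,
        P * (1 - diagonal lam * (diagonal c)⁻¹) * diagonal d * Pᵀ * Aᵀ * Y =
          (Aᵀ * A +
              P * ((diagonal d)⁻¹ * diagonal lam * (diagonal c - diagonal lam)⁻¹) *
                Pᵀ)⁻¹ * Aᵀ * Y := by
  have hd0 : ∀ i, d i ≠ 0 := fun i => (hd i).ne'
  have hc0 : ∀ i, c i ≠ 0 := fun i => ((hlc i).1.trans (hlc i).2).ne'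
  have hcl0 : ∀ i, c i - lam i ≠ 0 := fun i => sub_ne_zero.2 (hlc i).2.ne'
  have hPT : P * Pᵀ = 1 := mul_eq_one_comm.mp hP
  have hPi : P⁻¹ = Pᵀ := inv_eq_right_inv hPT
  have hPTi : Pᵀ⁻¹ = P := inv_eq_right_inv hP
  -- (AᵀA)⁻¹ = P D Pᵀ
  have hX : (Aᵀ * A)⁻¹ = P * diagonal d * Pᵀ := by
    calc (Aᵀ * A)⁻¹ = (P * Pᵀ) * (Aᵀ * A)⁻¹ * (P * Pᵀ) := by
          rw [hPT, Matrix.one_mul, Matrix.mul_one]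
      _ = P * (Pᵀ * (Aᵀ * A)⁻¹ * P) * Pᵀ := by
          simp only [Matrix.mul_assoc]
      _ = P * diagonal d * Pᵀ := by rw [hPD]
  have hXunit : IsUnit ((Aᵀ * A)⁻¹).det := by
    rw [hX]
    simp only [det_mul, det_diagonal, isUnit_iff_ne_zero]
    have h1 : P.det * Pᵀ.det = 1 := by rw [← det_mul, hPT, det_one]
    intro h
    rcases mul_eq_zero.mp h with h' | h'
    · rcases mul_eq_zero.mp h' with h'' | h''
      · simp [h''] at h1
      · exact (Finset.prod_ne_zero_iff.2 fun i _ => hd0 i) h''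
    · simp [h'] at h1
  have hAA : IsUnit (Aᵀ * A) :=
    (isUnit_iff_isUnit_det _).2 (isUnit_nonsing_inv_det_iff.mp hXunit)
  -- AᵀA = P D⁻¹ Pᵀ
  have hAAeq : Aᵀ * A = P * diagonal (fun i => (d i)⁻¹) * Pᵀ := by
    rw [← nonsing_inv_nonsing_inv (Aᵀ * A) ((isUnit_iff_isUnit_det _).1 hAA), hX,
      Matrix.mul_inv_rev, Matrix.mul_inv_rev, hPi, hPTi, diag_inv d hd0, Matrix.mul_assoc]
  set e : Fin k → ℝ := fun i => (d i)⁻¹ + (d i)⁻¹ * lam i * (c i - lam i)⁻¹ with he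
  have he0 : ∀ i, e i ≠ 0 := by
    intro i
    exact (add_pos (inv_pos.2 (hd i)) (mul_pos (mul_pos (inv_pos.2 (hd i)) (hlc i).1)
      (inv_pos.2 (sub_pos.2 (hlc i).2)))).ne'
  -- collapse the sum
  have hsum : Aᵀ * A +
      P * ((diagonal d)⁻¹ * diagonal lam * (diagonal c - diagonal lam)⁻¹) * Pᵀ
      = P * diagonal e * Pᵀ := by
    rw [hAAeq, diag_inv d hd0, diagonal_sub, diag_inv (fun i => c i - lam i) hcl0,
      diagonal_mul_diagonal, diagonal_mul_diagonal, ← Matrix.add_mul, ← Matrix.mul_add,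
      ← diagonal_add]
  have hPDPunit : IsUnit (P * diagonal e * Pᵀ) := by
    rw [isUnit_iff_isUnit_det]
    simp only [det_mul, det_diagonal, isUnit_iff_ne_zero]
    have h1 : P.det * Pᵀ.det = 1 := by rw [← det_mul, hPT, det_one]
    intro h
    rcases mul_eq_zero.mp h with h' | h'
    · rcases mul_eq_zero.mp h' with h'' | h''
      · simp [h''] at h1
      · exact (Finset.prod_ne_zero_iff.2 fun i _ => he0 i) h''
    · simp [h'] at h1
  constructor
  · rw [hsum]; exact hPDPunit
  · intro Y
    rw [hsum, Matrix.mul_inv_rev, Matrix.mul_inv_rev, hPi, hPTi, diag_inv e he0]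
    have hcoef : (1 - diagonal lam * (diagonal c)⁻¹) * diagonal d
        = diagonal (fun i => (e i)⁻¹) := by
      rw [diag_inv c hc0, diagonal_mul_diagonal, ← diagonal_one, diagonal_sub,
        diagonal_mul_diagonal]
      refine congrArg diagonal (funext fun i => ?_)
      have hmul : e i * ((1 - lam i * (c i)⁻¹) * d i) = 1 := by
        rw [he]
        field_simp [hd0 i, hc0 i, hcl0 i]
        ring
      exact eq_inv_of_mul_eq_one_left (mul_comm ((1 - lam i * (c i)⁻¹) * d i) (e i) ▸ hmul)
    rw [Matrix.mul_assoc P, hcoef]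
    simp only [Matrix.mul_assoc]
end

section
/- Let p ≥ 2 and m ≥ 1 be integers, let w ∈ ℝ^p be nonzero, let Z be a real m×p matrix such that S := ZᵀZ is invertible, and let R be a p×p orthogonal matrix with Rw = ‖w‖ e_1. Write ZRᵀ = (v_1 | V_2), where v_1 ∈ ℝ^m is the first column and V_2 ∈ ℝ^{m×(p−1)} consists of the remaining columns, and assume V_2ᵀV_2 is invertible. Then wᵀS⁻¹w = (wᵀw) / ( v_1ᵀ(I_m − V_2(V_2ᵀV_2)⁻¹V_2ᵀ)v_1 ). -/
open Matrix

/-- Rotation identity: if `R` is orthogonal with `Rw = ‖w‖e₁`, `ZRᵀ = (v₁ | V₂)`, and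
`S = ZᵀZ` and `V₂ᵀV₂` are invertible, then
`wᵀS⁻¹w = wᵀw / (v₁ᵀ(I − V₂(V₂ᵀV₂)⁻¹V₂ᵀ)v₁)`. -/
theorem stmt19 (p m : ℕ) (hp : 2 ≤ p) (hm : 1 ≤ m)
    (w : Fin p → ℝ) (hw : w ≠ 0)
    (Z : Matrix (Fin m) (Fin p) ℝ) (hS : IsUnit (Zᵀ * Z))
    (R : Matrix (Fin p) (Fin p) ℝ) (hR : Rᵀ * R = 1)
    (hRw : R *ᵥ w = Real.sqrt (w ⬝ᵥ w) • (Pi.single (⟨0, by omega⟩ : Fin p) 1 : Fin p → ℝ))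
    (v1 : Fin m → ℝ) (hv1 : v1 = fun i => (Z * Rᵀ) i ⟨0, by omega⟩)
    (V2 : Matrix (Fin m) (Fin (p - 1)) ℝ)
    (hV2 : V2 = (Z * Rᵀ).submatrix id
      (fun j : Fin (p - 1) => Fin.cast (by omega) j.succ))
    (hV2inv : IsUnit (V2ᵀ * V2)) :
    w ⬝ᵥ ((Zᵀ * Z)⁻¹ *ᵥ w) =
      (w ⬝ᵥ w) / (v1 ⬝ᵥ ((1 - V2 * (V2ᵀ * V2)⁻¹ * V2ᵀ) *ᵥ v1)) := by
  have h1 : p - 1 + 1 = p := by omega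
  set U : Matrix (Fin m) (Fin p) ℝ := Z * Rᵀ with hU
  set e0 : Fin p → ℝ := Pi.single (⟨0, by omega⟩ : Fin p) 1 with he0
  set s : ℝ := Real.sqrt (w ⬝ᵥ w) with hs
  set q : Fin (p - 1) → ℝ := (V2ᵀ * V2)⁻¹ *ᵥ (V2ᵀ *ᵥ v1) with hq
  set u : Fin p → ℝ :=
    fun j => Fin.cons (α := fun _ => ℝ) 1 (fun i => -q i) (Fin.cast h1.symm j) with hu
  set r : Fin m → ℝ := v1 - V2 *ᵥ q with hr
  set c : ℝ := v1 ⬝ᵥ r with hc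
  have hdetS : IsUnit (Zᵀ * Z).det := (Matrix.isUnit_iff_isUnit_det _).mp hS
  have hdetV : IsUnit (V2ᵀ * V2).det := (Matrix.isUnit_iff_isUnit_det _).mp hV2inv
  have hcast0 : Fin.cast h1 (0 : Fin (p - 1 + 1)) = (⟨0, by omega⟩ : Fin p) := rfl
  have hu0 : u (⟨0, by omega⟩ : Fin p) = 1 := by
    show Fin.cons (α := fun _ => ℝ) 1 (fun i => -q i)
      (Fin.cast h1.symm (⟨0, by omega⟩ : Fin p)) = 1
    have : Fin.cast h1.symm (⟨0, by omega⟩ : Fin p) = 0 := rfl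
    rw [this, Fin.cons_zero]
  have husucc : ∀ j : Fin (p - 1), u (Fin.cast h1 j.succ) = -q j := by
    intro j
    show Fin.cons (α := fun _ => ℝ) 1 (fun i => -q i)
      (Fin.cast h1.symm (Fin.cast h1 j.succ)) = -q j
    have : Fin.cast h1.symm (Fin.cast h1 j.succ) = j.succ := rfl
    rw [this, Fin.cons_succ]
  have hsplit : ∀ f : Fin p → ℝ,
      (∑ j, f j) = f (⟨0, by omega⟩ : Fin p) + ∑ j : Fin (p - 1), f (Fin.cast h1 j.succ) := by
    intro f
    calc (∑ j, f j) = ∑ j : Fin (p - 1 + 1), f (Fin.cast h1 j) :=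
          (Fintype.sum_equiv (finCongr h1) _ f (fun i => rfl)).symm
      _ = f (Fin.cast h1 0) + ∑ j : Fin (p - 1), f (Fin.cast h1 j.succ) :=
          Fin.sum_univ_succ _
      _ = _ := by rw [hcast0]
  have hV2app : ∀ i j, V2 i j = U i (Fin.cast h1 j.succ) := by
    intro i j
    rw [hV2]
    rfl
  have hv1app : ∀ i, v1 i = U i (⟨0, by omega⟩ : Fin p) := by
    intro i; rw [hv1]
  -- U *ᵥ u = r
  have hUu : U *ᵥ u = r := by
    funext i
    show (∑ j, U i j * u j) = r i
    rw [hsplit (fun j => U i j * u j), hu0]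
    simp only [husucc, mul_neg, mul_one]
    have : (r : Fin m → ℝ) i = v1 i - ∑ j, V2 i j * q j := by
      simp [hr, Matrix.mulVec, dotProduct]
    rw [this, hv1app i, Finset.sum_neg_distrib]
    congr 1
    · congr 1
      apply Finset.sum_congr rfl
      intro j _
      rw [hV2app i j]
  -- V2ᵀ *ᵥ r = 0
  have hV2r : V2ᵀ *ᵥ r = 0 := by
    rw [hr, Matrix.mulVec_sub, hq, Matrix.mulVec_mulVec, Matrix.mulVec_mulVec,
      Matrix.mul_nonsing_inv _ hdetV, Matrix.one_mulVec, sub_self]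
  -- Uᵀ *ᵥ r = c • e0
  have hUtr : Uᵀ *ᵥ r = c • e0 := by
    have key : ∀ k : Fin (p - 1 + 1),
        (Uᵀ *ᵥ r) (Fin.cast h1 k) = (c • e0) (Fin.cast h1 k) := by
      intro k
      induction k using Fin.cases with
      | zero =>
        rw [hcast0]
        show (∑ i, Uᵀ (⟨0, by omega⟩ : Fin p) i * r i) = c * e0 (⟨0, by omega⟩ : Fin p)
        have he : e0 (⟨0, by omega⟩ : Fin p) = 1 := by simp [he0]
        rw [he, mul_one, hc]
        apply Finset.sum_congr rfl
        intro i _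
        rw [Matrix.transpose_apply, ← hv1app i]
      | succ j =>
        have he : e0 (Fin.cast h1 j.succ) = 0 := by
          rw [he0]
          apply Pi.single_eq_of_ne
          intro hcontra
          have := congrArg Fin.val hcontra
          simp at this
        show (∑ i, Uᵀ (Fin.cast h1 j.succ) i * r i) = c * e0 (Fin.cast h1 j.succ)
        rw [he, mul_zero]
        have hz : (V2ᵀ *ᵥ r) j = 0 := by simp [hV2r]
        show (∑ i, U i (Fin.cast h1 j.succ) * r i) = 0
        rw [← hz]
        show _ = ∑ i, V2ᵀ j i * r i
        apply Finset.sum_congr rfl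
        intro i _
        rw [Matrix.transpose_apply, hV2app i j]
    funext k
    have := key (Fin.cast h1.symm k)
    have hk : Fin.cast h1 (Fin.cast h1.symm k) = k := rfl
    rwa [hk] at this
  -- Zᵀ *ᵥ r = c • (Rᵀ *ᵥ e0)
  have hRU : Rᵀ * Uᵀ = Zᵀ := by
    rw [hU, Matrix.transpose_mul, Matrix.transpose_transpose, ← Matrix.mul_assoc, hR,
      Matrix.one_mul]
  have hZtr : Zᵀ *ᵥ r = c • (Rᵀ *ᵥ e0) := by
    rw [← hRU, ← Matrix.mulVec_mulVec, hUtr, Matrix.mulVec_smul]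
  -- S *ᵥ (Rᵀ *ᵥ u) = c • (Rᵀ *ᵥ e0)
  have hSx : (Zᵀ * Z) *ᵥ (Rᵀ *ᵥ u) = c • (Rᵀ *ᵥ e0) := by
    have : (Zᵀ * Z) *ᵥ (Rᵀ *ᵥ u) = Zᵀ *ᵥ (U *ᵥ u) := by
      rw [hU, Matrix.mulVec_mulVec, Matrix.mulVec_mulVec, Matrix.mul_assoc]
    rw [this, hUu, hZtr]
  -- c ≠ 0
  have hcne : c ≠ 0 := by
    intro h0
    have h2 : (Zᵀ * Z) *ᵥ (Rᵀ *ᵥ u) = 0 := by rw [hSx, h0, zero_smul]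
    have h3 : Rᵀ *ᵥ u = 0 := by
      calc Rᵀ *ᵥ u = ((Zᵀ * Z)⁻¹ * (Zᵀ * Z)) *ᵥ (Rᵀ *ᵥ u) := by
            rw [Matrix.nonsing_inv_mul _ hdetS, Matrix.one_mulVec]
        _ = (Zᵀ * Z)⁻¹ *ᵥ ((Zᵀ * Z) *ᵥ (Rᵀ *ᵥ u)) := (Matrix.mulVec_mulVec _ _ _).symm
        _ = 0 := by rw [h2, Matrix.mulVec_zero]
    have hRRt : R * Rᵀ = 1 := mul_eq_one_comm.mp hR
    have hu0' : u = 0 := by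
      calc u = (R * Rᵀ) *ᵥ u := by rw [hRRt, Matrix.one_mulVec]
        _ = R *ᵥ (Rᵀ *ᵥ u) := by rw [Matrix.mulVec_mulVec]
        _ = 0 := by rw [h3, Matrix.mulVec_zero]
    rw [hu0'] at hu0
    simp at hu0
  -- S⁻¹ *ᵥ w = (s/c) • (Rᵀ *ᵥ u)
  have hw0 : w = s • (Rᵀ *ᵥ e0) := by
    have h4 : Rᵀ *ᵥ (R *ᵥ w) = w := by
      rw [Matrix.mulVec_mulVec, hR, Matrix.one_mulVec]
    rw [← h4, hRw, Matrix.mulVec_smul]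
  have hinv : (Zᵀ * Z)⁻¹ *ᵥ w = (s / c) • (Rᵀ *ᵥ u) := by
    have h5 : (Zᵀ * Z) *ᵥ ((s / c) • (Rᵀ *ᵥ u)) = w := by
      rw [Matrix.mulVec_smul, hSx, smul_smul, div_mul_cancel₀ s hcne, ← hw0]
    rw [← h5, Matrix.mulVec_mulVec, Matrix.nonsing_inv_mul _ hdetS, Matrix.one_mulVec]
  -- denominator equals c
  have hden : v1 ⬝ᵥ ((1 - V2 * (V2ᵀ * V2)⁻¹ * V2ᵀ) *ᵥ v1) = c := by
    have h6 : (V2 * (V2ᵀ * V2)⁻¹ * V2ᵀ) *ᵥ v1 = V2 *ᵥ q := by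
      rw [hq, Matrix.mulVec_mulVec, Matrix.mulVec_mulVec, Matrix.mul_assoc]
    rw [Matrix.sub_mulVec, Matrix.one_mulVec, h6, ← hr, hc]
  -- numerator
  have hwu : w ⬝ᵥ (Rᵀ *ᵥ u) = s := by
    rw [Matrix.dotProduct_mulVec, Matrix.vecMul_transpose, hRw,
      smul_dotProduct, he0, single_dotProduct, hu0]
    simp
  have hss : s * s = w ⬝ᵥ w := by
    apply Real.mul_self_sqrt
    exact Finset.sum_nonneg fun i _ => mul_self_nonneg _
  rw [hinv, dotProduct_smul, smul_eq_mul, hwu, hden]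
  rw [div_mul_eq_mul_div, hss]
end
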